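/- One has ∫_{1/2}^{1} ((1 − u)²/u) · log(u/(1 − u)) du = π²/12 + 1/4 − (3/2)·log 2. -/

import Mathlib

open intervalIntegral

namespace IntI
open Real MeasureTheory Set Filter Topology


/-! ### Integrability of `log` on `[0,1]` -/

lemma log_int01 : IntervalIntegrable Real.log volume 0 1 := by
  have h2 : IntervalIntegrable (fun x : ℝ => 2 * x ^ (-(1/2) : ℝ)) volume 0 1 :=
    (intervalIntegrable_rpow' (by norm_num)).const_mul 2
  refine h2.mono_fun' Real.measurable_log.aestronglyMeasurable ?_
  filter_upwards [ae_restrict_mem measurableSet_uIoc] with x hx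
  rw [uIoc_of_le (by norm_num : (0:ℝ) ≤ 1)] at hx
  obtain ⟨hx0, hx1⟩ := hx
  have hs : 0 < Real.sqrt x := Real.sqrt_pos.mpr hx0
  have h1 : Real.log ((Real.sqrt x)⁻¹) ≤ (Real.sqrt x)⁻¹ - 1 :=
    Real.log_le_sub_one_of_pos (by positivity)
  have h2' : -Real.log x = 2 * Real.log ((Real.sqrt x)⁻¹) := by
    rw [Real.log_inv, Real.log_sqrt hx0.le]; ring
  have hrp : x ^ (-(1/2) : ℝ) = (Real.sqrt x)⁻¹ := by
    rw [Real.sqrt_eq_rpow, ← Real.rpow_neg hx0.le]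
  have hlog : Real.log x ≤ 0 := Real.log_nonpos hx0.le hx1
  simp only [Real.norm_eq_abs, abs_of_nonpos hlog]
  rw [hrp]
  nlinarith [Real.sqrt_pos.mpr hx0]

lemma log_intsub : IntervalIntegrable (fun u : ℝ => Real.log (1 - u)) volume (1/2) 1 := by
  have h : IntervalIntegrable Real.log volume 0 (1/2) :=
    log_int01.mono_set (by rw [uIcc_of_le (by norm_num : (0:ℝ) ≤ 1/2),
      uIcc_of_le (by norm_num : (0:ℝ) ≤ 1)]; exact Icc_subset_Icc le_rfl (by norm_num))
  have h2 := (h.comp_sub_left 1).symm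
  norm_num at h2
  exact h2

/-! ### The moment integrals `∫ v^n log v = -1/(n+1)^2` -/

lemma powlog_int (n : ℕ) : IntervalIntegrable (fun v : ℝ => v ^ n * Real.log v) volume 0 1 :=
  log_int01.continuousOn_mul (continuous_pow n).continuousOn

lemma integral_pow_mul_log (n : ℕ) :
    ∫ v in (0:ℝ)..1, v ^ n * Real.log v = -(1 / ((n:ℝ)+1)^2) := by
  have hn : (0:ℝ) < (n:ℝ)+1 := by positivity
  set F : ℝ → ℝ :=
    fun v => v ^ (n+1) / ((n:ℝ)+1) * Real.log v - v ^ (n+1) / ((n:ℝ)+1)^2 with hF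
  have hFeq : F = fun v => (v ^ n / ((n:ℝ)+1)) * (v * Real.log v) - v ^ (n+1) / ((n:ℝ)+1)^2 := by
    funext v; simp only [hF]; ring
  have hcont : ContinuousOn F (Icc 0 1) := by
    rw [hFeq]
    exact ((((continuous_pow n).div_const _).mul Real.continuous_mul_log).sub
      ((continuous_pow (n+1)).div_const _)).continuousOn
  have hderiv : ∀ x ∈ Ioo (0:ℝ) 1, HasDerivAt F (x ^ n * Real.log x) x := by
    intro x hx
    have hx0 : x ≠ 0 := ne_of_gt hx.1
    have h1 : HasDerivAt (fun v : ℝ => v ^ (n+1) / ((n:ℝ)+1)) (x ^ n) x := by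
      have := (hasDerivAt_pow (n+1) x).div_const ((n:ℝ)+1)
      have hcast : ((n:ℝ)+1) * x ^ n / ((n:ℝ)+1) = x ^ n := by field_simp
      simpa [Nat.add_sub_cancel, Nat.cast_add, Nat.cast_one, hcast] using this
    have h2 : HasDerivAt Real.log x⁻¹ x := Real.hasDerivAt_log hx0
    have h3 := (h1.mul h2).sub ((h1.div_const ((n:ℝ)+1)))
    have hne : ((n:ℝ)+1) ≠ 0 := ne_of_gt hn
    convert h3 using 1
    · rfl
    · rfl
    · simp only [hF]
      funext v
      simp only [Pi.mul_apply, Pi.sub_apply]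
      field_simp
    · field_simp
      ring
  have := integral_eq_sub_of_hasDerivAt_of_le (by norm_num : (0:ℝ) ≤ 1) hcont hderiv
    (powlog_int n)
  rw [this]
  simp only [hF, one_pow, Real.log_one, Real.log_zero, zero_pow (Nat.succ_ne_zero n)]
  field_simp
  ring

/-! ### The alternating sum `∑ (-1)^n/(n+1)^2 = π²/12` -/

lemma hasSum_inv_sq : HasSum (fun n : ℕ => 1 / ((n:ℝ)+1) ^ 2) (π ^ 2 / 6) := by
  have h := (hasSum_nat_add_iff' (f := fun n : ℕ => (1:ℝ) / (n:ℝ) ^ 2) 1).mpr hasSum_zeta_two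
  simp only [Finset.range_one, Finset.sum_singleton, Nat.cast_zero] at h
  norm_num at h
  convert h using 2 with n
  rfl
  ring

lemma hasSum_odd_part :
    HasSum (fun n : ℕ => (if Even n then 0 else 1 / ((n:ℝ)+1) ^ 2)) (π ^ 2 / 24) := by
  have hinj : Function.Injective (fun k : ℕ => 2 * k + 1) := by
    intro a b h
    dsimp only at h
    omega
  refine (hinj.hasSum_iff ?_).mp ?_
  · intro x hx
    have hev : Even x := by
      rcases Nat.even_or_odd x with h | h
      · exact h
      · obtain ⟨k, hk⟩ := h
        exact absurd ⟨k, hk.symm⟩ hx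
    simp [hev]
  · have h := hasSum_inv_sq.div_const 4
    have hv : π ^ 2 / 6 / 4 = π ^ 2 / 24 := by ring
    rw [hv] at h
    have hfun : ((fun n : ℕ => (if Even n then 0 else 1 / ((n:ℝ)+1) ^ 2)) ∘
        (fun k : ℕ => 2 * k + 1)) = fun k : ℕ => 1 / ((k:ℝ)+1) ^ 2 / 4 := by
      funext k
      have hne : ¬ Even (2 * k + 1) := by simp [Nat.even_add_one, parity_simps]
      simp only [Function.comp_apply, hne, if_false]
      push_cast
      have : ((k:ℝ)+1) ≠ 0 := by positivity
      field_simp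
      ring
    rw [hfun]
    exact h

lemma hasSum_alt : HasSum (fun n : ℕ => (-1:ℝ) ^ n / ((n:ℝ)+1) ^ 2) (π ^ 2 / 12) := by
  have h := hasSum_inv_sq.sub (hasSum_odd_part.mul_left 2)
  have heq : (fun n : ℕ => 1 / ((n:ℝ)+1) ^ 2 - 2 * (if Even n then 0 else 1 / ((n:ℝ)+1) ^ 2))
      = fun n : ℕ => (-1:ℝ) ^ n / ((n:ℝ)+1) ^ 2 := by
    funext n
    rcases Nat.even_or_odd n with he | ho
    · rw [if_pos he, he.neg_one_pow]
      ring
    · rw [if_neg (Nat.not_even_iff_odd.mpr ho), ho.neg_one_pow]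
      ring
  rw [heq] at h
  convert h using 1
  rfl
  ring



lemma one_add_cont : ContinuousOn (fun v : ℝ => (1 + v)⁻¹) (Icc 0 1) := by
  apply ContinuousOn.inv₀ (by fun_prop)
  intro x hx
  have := hx.1
  positivity

lemma h_int01 : IntervalIntegrable (fun v : ℝ => Real.log v / (1 + v)) volume 0 1 := by
  simp only [div_eq_mul_inv]
  exact log_int01.mul_continuousOn
    (by rw [uIcc_of_le (by norm_num : (0:ℝ) ≤ 1)]; exact one_add_cont)

lemma rem_int (N : ℕ) :
    IntervalIntegrable (fun v : ℝ => v ^ N * Real.log v / (1 + v)) volume 0 1 := by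
  simp only [div_eq_mul_inv]
  exact (powlog_int N).mul_continuousOn
    (by rw [uIcc_of_le (by norm_num : (0:ℝ) ≤ 1)]; exact one_add_cont)

lemma key_identity (N : ℕ) {v : ℝ} (hv : v ∈ Icc (0:ℝ) 1) :
    Real.log v / (1 + v) = (∑ n ∈ Finset.range N, (-1:ℝ) ^ n * (v ^ n * Real.log v))
      + (-1:ℝ) ^ N * (v ^ N * Real.log v / (1 + v)) := by
  rcases eq_or_lt_of_le hv.1 with h0 | h0
  · simp [← h0, Real.log_zero]
  · have h1v : (0:ℝ) < 1 + v := by linarith [hv.1]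
    have hne : (-v) ≠ 1 := by intro h; nlinarith [h0]
    have hgeom : ∑ n ∈ Finset.range N, (-v) ^ n = (1 - (-v) ^ N) / (1 + v) := by
      rw [geom_sum_eq hne, div_eq_div_iff (by intro h; linarith : (-v) - 1 ≠ 0) (ne_of_gt h1v)]
      ring
    have hs : ∑ n ∈ Finset.range N, (-1:ℝ) ^ n * (v ^ n * Real.log v)
        = (∑ n ∈ Finset.range N, (-v) ^ n) * Real.log v := by
      rw [Finset.sum_mul]
      congr 1 with n
      rw [neg_pow]
      ring
    rw [hs, hgeom]
    field_simp
    ring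

lemma integral_sub_partial (N : ℕ) :
    (∫ v in (0:ℝ)..1, Real.log v / (1 + v))
      - (∑ n ∈ Finset.range N, (-1:ℝ) ^ n * (-(1 / ((n:ℝ)+1)^2)))
      = (-1:ℝ) ^ N * ∫ v in (0:ℝ)..1, v ^ N * Real.log v / (1 + v) := by
  have hterm : ∀ n ∈ Finset.range N,
      IntervalIntegrable (fun v : ℝ => (-1:ℝ) ^ n * (v ^ n * Real.log v)) volume 0 1 :=
    fun n _ => (powlog_int n).const_mul _
  have hsumint : IntervalIntegrable
      (fun v : ℝ => ∑ n ∈ Finset.range N, (-1:ℝ) ^ n * (v ^ n * Real.log v)) volume 0 1 := by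
    have := IntervalIntegrable.sum (Finset.range N) hterm
    have heq : (∑ n ∈ Finset.range N, fun v : ℝ => (-1:ℝ) ^ n * (v ^ n * Real.log v))
        = fun v : ℝ => ∑ n ∈ Finset.range N, (-1:ℝ) ^ n * (v ^ n * Real.log v) := by
      funext v; simp
    rwa [heq] at this
  have hrem := (rem_int N).const_mul ((-1:ℝ) ^ N)
  have hcongr : (∫ v in (0:ℝ)..1, Real.log v / (1 + v))
      = ∫ v in (0:ℝ)..1, ((∑ n ∈ Finset.range N, (-1:ℝ) ^ n * (v ^ n * Real.log v))
        + (-1:ℝ) ^ N * (v ^ N * Real.log v / (1 + v))) := by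
    apply integral_congr
    intro v hv
    rw [uIcc_of_le (by norm_num : (0:ℝ) ≤ 1)] at hv
    exact key_identity N hv
  rw [hcongr, integral_add hsumint hrem, intervalIntegral.integral_finset_sum hterm]
  simp only [intervalIntegral.integral_const_mul, integral_pow_mul_log]
  ring

lemma integral_log_one_add :
    ∫ v in (0:ℝ)..1, Real.log v / (1 + v) = -(π ^ 2 / 12) := by
  set T := ∫ v in (0:ℝ)..1, Real.log v / (1 + v) with hT
  set P : ℕ → ℝ := fun N => ∑ n ∈ Finset.range N, (-1:ℝ) ^ n * (-(1 / ((n:ℝ)+1)^2)) with hP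
  have hbound : ∀ N : ℕ, |T - P N| ≤ 1 / ((N:ℝ)+1)^2 := by
    intro N
    rw [integral_sub_partial N, abs_mul, abs_pow, abs_neg, abs_one, one_pow, one_mul]
    have hg : IntervalIntegrable (fun v : ℝ => -(v ^ N * Real.log v)) volume 0 1 :=
      (powlog_int N).neg
    have hae : ∀ᵐ t ∂(volume.restrict (Set.uIoc (0:ℝ) 1)),
        ‖t ^ N * Real.log t / (1 + t)‖ ≤ -(t ^ N * Real.log t) := by
      filter_upwards [ae_restrict_mem measurableSet_uIoc] with v hv
      rw [uIoc_of_le (by norm_num : (0:ℝ) ≤ 1)] at hv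
      have hv0 : 0 < v := hv.1
      have hv1 : v ≤ 1 := hv.2
      have hlog : Real.log v ≤ 0 := Real.log_nonpos hv0.le hv1
      have h1v : (1:ℝ) ≤ 1 + v := by linarith
      rw [Real.norm_eq_abs, abs_div, abs_mul, abs_pow, abs_of_pos hv0,
        abs_of_nonpos hlog, abs_of_pos (by linarith : (0:ℝ) < 1 + v)]
      calc v ^ N * -Real.log v / (1 + v) ≤ v ^ N * -Real.log v :=
            div_le_self (by nlinarith [pow_nonneg hv0.le N]) h1v
        _ = -(v ^ N * Real.log v) := by ring
    have hle := intervalIntegral.norm_integral_le_abs_of_norm_le hae hg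
    rw [Real.norm_eq_abs] at hle
    have hgval : (∫ v in (0:ℝ)..1, -(v ^ N * Real.log v)) = 1 / ((N:ℝ)+1)^2 := by
      rw [intervalIntegral.integral_neg, integral_pow_mul_log]
      ring
    rw [hgval] at hle
    calc |∫ v in (0:ℝ)..1, v ^ N * Real.log v / (1 + v)| ≤ |1 / ((N:ℝ)+1)^2| := hle
      _ = 1 / ((N:ℝ)+1)^2 := abs_of_pos (by positivity)
  have htend0 : Tendsto (fun N : ℕ => 1 / ((N:ℝ)+1)^2) atTop (𝓝 0) := by
    have h1 : Tendsto (fun n : ℕ => 1 / ((n:ℝ)+1)) atTop (𝓝 0) :=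
      tendsto_one_div_add_atTop_nhds_zero_nat
    have h2 := h1.mul h1
    rw [mul_zero] at h2
    have heq : (fun N : ℕ => 1/((N:ℝ)+1)^2) = fun N : ℕ => (1/((N:ℝ)+1)) * (1/((N:ℝ)+1)) := by
      funext N
      rw [one_div, one_div, sq, mul_inv]
    rw [heq]
    exact h2
  have hTP : Tendsto (fun N => T - P N) atTop (𝓝 0) := by
    apply squeeze_zero_norm ?_ htend0
    intro N
    simpa [Real.norm_eq_abs] using hbound N
  have hPlim : Tendsto P atTop (𝓝 (-(π ^ 2 / 12))) := by
    have h := hasSum_alt.neg.tendsto_sum_nat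
    have heq : P = fun N => ∑ n ∈ Finset.range N, -((-1:ℝ) ^ n / ((n:ℝ)+1) ^ 2) := by
      funext N
      apply Finset.sum_congr rfl
      intro n _
      ring
    rw [heq]
    exact h
  have hPT : Tendsto P atTop (𝓝 T) := by
    have h2 := (tendsto_const_nhds (x := T) (f := atTop (α := ℕ))).sub hTP
    rw [sub_zero] at h2
    have heq : (fun N => T - (T - P N)) = P := by funext N; ring
    rwa [heq] at h2
  exact tendsto_nhds_unique hPT hPlim




lemma loghalf_int : IntervalIntegrable Real.log volume (1/2) 1 :=
  intervalIntegrable_log (by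
    rw [uIcc_of_le (by norm_num : (1/2:ℝ) ≤ 1)]
    intro h
    exact absurd h.1 (by norm_num))

lemma g_int : IntervalIntegrable
    (fun u : ℝ => (Real.log u - Real.log (1 - u)) * u⁻¹) volume (1/2) 1 := by
  refine (loghalf_int.sub log_intsub).mul_continuousOn ?_
  apply ContinuousOn.inv₀ continuousOn_id
  intro x hx
  rw [uIcc_of_le (by norm_num : (1/2:ℝ) ≤ 1)] at hx
  intro h
  simp only [id_eq] at h
  rw [h] at hx
  exact absurd hx.1 (by norm_num)

lemma k_int : IntervalIntegrable
    (fun u : ℝ => (u - 2) * (Real.log u - Real.log (1 - u))) volume (1/2) 1 :=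
  (loghalf_int.sub log_intsub).continuousOn_mul (by fun_prop)

lemma J_val :
    ∫ u in (1/2:ℝ)..1, (Real.log u - Real.log (1 - u)) * u⁻¹ = π ^ 2 / 12 := by
  set h : ℝ → ℝ := fun v => Real.log v / (1 + v) with hh
  set φ : ℝ → ℝ := fun w => (1 - w) / w with hφdef
  have hmeas : Measurable h := Real.measurable_log.div (measurable_const.add measurable_id)
  have hint0x : ∀ x : ℝ, x ∈ Icc (0:ℝ) 1 → IntervalIntegrable h volume 0 x := by
    intro x hx
    apply h_int01.mono_set
    rw [uIcc_of_le hx.1, uIcc_of_le (by norm_num : (0:ℝ) ≤ 1)]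
    exact Icc_subset_Icc le_rfl hx.2
  have hφcont : ContinuousOn φ (Icc (1/2:ℝ) 1) := by
    apply ContinuousOn.div (by fun_prop) (by fun_prop)
    intro x hx
    exact (lt_of_lt_of_le (by norm_num) hx.1).ne'
  have hmaps : MapsTo φ (Icc (1/2:ℝ) 1) (uIcc (0:ℝ) 1) := by
    intro u hu
    rw [uIcc_of_le (by norm_num : (0:ℝ) ≤ 1)]
    have hu0 : (0:ℝ) < u := lt_of_lt_of_le (by norm_num) hu.1
    constructor
    · exact div_nonneg (by linarith [hu.2]) hu0.le
    · rw [hφdef]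
      simp only
      rw [div_le_one hu0]
      linarith [hu.1]
  have hWcont : ContinuousOn (fun u : ℝ => ∫ t in (0:ℝ)..(φ u), h t)
      (Icc (1/2:ℝ) 1) := by
    have hM : ContinuousOn (fun x => ∫ t in (0:ℝ)..x, h t) (uIcc (0:ℝ) 1) :=
      intervalIntegral.continuousOn_primitive_interval' h_int01 left_mem_uIcc
    exact hM.comp hφcont hmaps
  have hWderiv : ∀ u ∈ Ioo (1/2:ℝ) 1,
      HasDerivAt (fun u : ℝ => ∫ t in (0:ℝ)..(φ u), h t)
        ((Real.log u - Real.log (1 - u)) * u⁻¹) u := by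
    intro u hu
    have hu0 : (0:ℝ) < u := lt_trans (by norm_num) hu.1
    have h1u : (0:ℝ) < 1 - u := by linarith [hu.2]
    have hx0 : (0:ℝ) < φ u := div_pos h1u hu0
    have hx1 : φ u < 1 := by
      rw [hφdef]; simp only; rw [div_lt_one hu0]; linarith [hu.1]
    have hM : HasDerivAt (fun y => ∫ t in (0:ℝ)..y, h t) (h (φ u)) (φ u) := by
      refine intervalIntegral.integral_hasDerivAt_right (hint0x _ ⟨hx0.le, hx1.le⟩)
        hmeas.aestronglyMeasurable.stronglyMeasurableAtFilter ?_
      exact (Real.continuousAt_log hx0.ne').div (by fun_prop) (by positivity)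
    have hφ : HasDerivAt φ ((-1 * u - (1 - u) * 1) / u ^ 2) u :=
      (((hasDerivAt_id u).const_sub 1)).div (hasDerivAt_id u) hu0.ne'
    have hcomp := hM.comp u hφ
    convert hcomp using 1
    rfl
    rfl
    rfl
    simp only [hh, hφdef, Function.comp]
    rw [Real.log_div h1u.ne' hu0.ne',
      show (1:ℝ) + (1 - u) / u = 1 / u by field_simp; ring]
    field_simp
    ring
  have := integral_eq_sub_of_hasDerivAt_of_le (by norm_num : (1/2:ℝ) ≤ 1)
    hWcont hWderiv g_int
  rw [this]
  simp only [hh, hφdef]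
  norm_num [intervalIntegral.integral_same, integral_log_one_add]

lemma K_val :
    ∫ u in (1/2:ℝ)..1, (u - 2) * (Real.log u - Real.log (1 - u))
      = 1/4 - (3/2) * Real.log 2 := by
  set G : ℝ → ℝ := fun u =>
    (u^2/2 - 2*u) * Real.log u - ((3 - u)/2) * ((1 - u) * Real.log (1 - u)) + u/2 with hG
  have hcont : ContinuousOn G (Icc (1/2:ℝ) 1) := by
    apply ContinuousOn.add ?_ (by fun_prop)
    apply ContinuousOn.sub
    · apply ContinuousOn.mul (by fun_prop)
      apply ContinuousOn.log continuousOn_id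
      intro x hx
      exact (lt_of_lt_of_le (by norm_num) hx.1).ne'
    · apply ContinuousOn.mul (by fun_prop)
      exact Real.continuous_mul_log.comp_continuousOn (by fun_prop)
  have hderiv : ∀ u ∈ Ioo (1/2:ℝ) 1,
      HasDerivAt G ((u - 2) * (Real.log u - Real.log (1 - u))) u := by
    intro u hu
    have hu0 : (0:ℝ) < u := lt_trans (by norm_num) hu.1
    have h1u : (0:ℝ) < 1 - u := by linarith [hu.2]
    have L1 : HasDerivAt Real.log u⁻¹ u := Real.hasDerivAt_log hu0.ne'
    have P1 : HasDerivAt (fun u : ℝ => u^2/2 - 2*u) (2*u^1/2 - 2*1) u :=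
      ((hasDerivAt_pow 2 u).div_const 2).sub ((hasDerivAt_id u).const_mul 2)
    have T1 := P1.mul L1
    have L2 : HasDerivAt (fun u : ℝ => Real.log (1 - u)) ((1 - u)⁻¹ * (-1)) u :=
      (Real.hasDerivAt_log h1u.ne').comp u ((hasDerivAt_id u).const_sub 1)
    have Q : HasDerivAt (fun u : ℝ => (1 - u) * Real.log (1 - u))
        (-1 * Real.log (1 - u) + (1 - u) * ((1 - u)⁻¹ * (-1))) u :=
      ((hasDerivAt_id u).const_sub 1).mul L2
    have C : HasDerivAt (fun u : ℝ => (3 - u)/2) (-1/2) u :=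
      ((hasDerivAt_id u).const_sub 3).div_const 2
    have T2 := C.mul Q
    have T3 : HasDerivAt (fun u : ℝ => u/2) (1/2) u := (hasDerivAt_id u).div_const 2
    have := (T1.sub T2).add T3
    convert this using 1
    have h2u : ((2:ℕ):ℝ) = 2 := by norm_num
    rfl
    rfl
    rfl
    field_simp
    ring
  have heval := integral_eq_sub_of_hasDerivAt_of_le (by norm_num : (1/2:ℝ) ≤ 1)
    hcont hderiv k_int
  rw [heval]
  have hlog2 : Real.log (1/2) = -Real.log 2 := by rw [one_div, Real.log_inv]
  simp only [hG]
  norm_num [hlog2]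
  ring

theorem main :
    ∫ u in (1/2 : ℝ)..1, ((1 - u) ^ 2 / u) * Real.log (u / (1 - u))
      = π ^ 2 / 12 + 1/4 - (3/2) * Real.log 2 := by
  have hsplit : EqOn (fun u : ℝ => ((1 - u) ^ 2 / u) * Real.log (u / (1 - u)))
      (fun u : ℝ => (Real.log u - Real.log (1 - u)) * u⁻¹
        + (u - 2) * (Real.log u - Real.log (1 - u))) (uIcc (1/2:ℝ) 1) := by
    intro u hu
    rw [uIcc_of_le (by norm_num : (1/2:ℝ) ≤ 1)] at hu
    have hu0 : (0:ℝ) < u := lt_of_lt_of_le (by norm_num) hu.1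
    rcases eq_or_lt_of_le hu.2 with h1 | h1
    · rw [h1]
      norm_num
    · have h1u : (0:ℝ) < 1 - u := by linarith
      simp only
      rw [Real.log_div hu0.ne' h1u.ne']
      field_simp
      ring
  rw [integral_congr hsplit, integral_add g_int k_int, J_val, K_val]
  ring



end IntI

/-- Evaluation of the definite integral `I`:
`∫_{1/2}^{1} ((1 − u)²/u) log(u/(1 − u)) du = π²/12 + 1/4 − (3/2) log 2`. -/
theorem integral_I_value :
    ∫ u in (1/2 : ℝ)..1, ((1 - u) ^ 2 / u) * Real.log (u / (1 - u))
      = Real.pi ^ 2 / 12 + 1/4 - (3/2) * Real.log 2 := by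
  exact IntI.main
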